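/- Let Δ^{m-1} and Δ^{n-1} be standard simplices and f : Δ^{m-1} × Δ^{n-1} → ℝ be jointly continuous. Define g(x,y) := sup { E_{X∼p}[f(X,y)] : p a Borel probability measure on Δ^{m-1} with E_{X∼p}[X] = x }. Then g is upper semi-continuous on Δ^{m-1} × Δ^{n-1}. -/

import Mathlib

open MeasureTheory

section Stmt11Aux

variable {m n : ℕ}

/-- A continuous function on a compact space is integrable for any finite measure. -/
lemma stmt11_integrable_of_continuous {X : Type*} [TopologicalSpace X] [CompactSpace X]
    [MeasurableSpace X] [OpensMeasurableSpace X] {E : Type*} [NormedAddCommGroup E]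
    (μ : Measure X) [IsFiniteMeasure μ] {g : X → E} (hg : Continuous g) : Integrable g μ :=
  hg.integrable_of_hasCompactSupport
    (IsCompact.of_isClosed_subset isCompact_univ (isClosed_tsupport _) (Set.subset_univ _))

lemma stmt11_sum_pad {M : Type*} [AddCommMonoid M] {ι : Type*} [Fintype ι] {Nn : ℕ}
    (e : ι ↪ Fin Nn) (F : Fin Nn → M) (h0 : ∀ i, (¬ ∃ j, e j = i) → F i = 0) :
    ∑ i, F i = ∑ j, F (e j) := by
  classical
  have h1 : ∑ i ∈ Finset.univ.image (fun j : ι => e j), F i = ∑ j, F (e j) :=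
    Finset.sum_image (fun x _ y _ h => e.injective h)
  rw [← h1]
  refine (Finset.sum_subset (Finset.subset_univ _) ?_).symm
  intro i _ hi
  refine h0 i ?_
  rintro ⟨j, rfl⟩
  exact hi (Finset.mem_image_of_mem _ (Finset.mem_univ j))

variable (f : ↥(stdSimplex ℝ (Fin m)) × ↥(stdSimplex ℝ (Fin n)) → ℝ)

/-- The graph set of `f (·, y)`. -/
def stmt11Gam (y : ↥(stdSimplex ℝ (Fin n))) : Set ((Fin m → ℝ) × ℝ) :=
  Set.range fun z : ↥(stdSimplex ℝ (Fin m)) => ((z : Fin m → ℝ), f (z, y))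

/-- Parametrization of convex combinations with `m+2` atoms. -/
def stmt11Psi (y : ↥(stdSimplex ℝ (Fin n)))
    (q : ↥(stdSimplex ℝ (Fin (m+2))) × (Fin (m+2) → ↥(stdSimplex ℝ (Fin m)))) :
    (Fin m → ℝ) × ℝ :=
  (∑ i, (q.1 : Fin (m+2) → ℝ) i • (q.2 i : Fin m → ℝ),
   ∑ i, (q.1 : Fin (m+2) → ℝ) i * f (q.2 i, y))

/-- Carathéodory: membership in the convex hull of the graph is witnessed by `m+2` atoms. -/
lemma stmt11_mem_hull_iff (hm : Nonempty ↥(stdSimplex ℝ (Fin m)))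
    (y : ↥(stdSimplex ℝ (Fin n))) (c : (Fin m → ℝ) × ℝ) :
    c ∈ convexHull ℝ (stmt11Gam f y) ↔ ∃ q, stmt11Psi f y q = c := by
  classical
  constructor
  · intro hc
    obtain ⟨ι, hfin, zz, w, hzr, hAI, hw0, hw1, hwz⟩ :=
      eq_pos_convex_span_of_mem_convexHull hc
    have hfd : FiniteDimensional ℝ ((Fin m → ℝ) × ℝ) := by infer_instance
    have hcard : Fintype.card ι ≤ m + 2 := by
      refine hAI.card_le_finrank_succ.trans ?_
      have h1 : Module.finrank ℝ (vectorSpan ℝ (Set.range zz)) ≤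
          Module.finrank ℝ ((Fin m → ℝ) × ℝ) := Submodule.finrank_le _
      have h2 : Module.finrank ℝ ((Fin m → ℝ) × ℝ) = m + 1 := by
        rw [Module.finrank_prod, Module.finrank_fin_fun, Module.finrank_self]
      omega
    obtain ⟨e⟩ : Nonempty (ι ↪ Fin (m + 2)) :=
      Function.Embedding.nonempty_of_card_le (by simpa using hcard)
    have hz : ∀ j, ∃ s : ↥(stdSimplex ℝ (Fin m)), ((s : Fin m → ℝ), f (s, y)) = zz j :=
      fun j => hzr ⟨j, rfl⟩
    choose ζ hζ using hz
    have hkey : ∀ (j : ι) (h : ∃ j', e j' = e j), h.choose = j :=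
      fun j h => e.injective h.choose_spec
    set lam' : Fin (m + 2) → ℝ :=
      fun i => if h : ∃ j, e j = i then w h.choose else 0 with hlam'
    set z' : Fin (m + 2) → ↥(stdSimplex ℝ (Fin m)) :=
      fun i => if h : ∃ j, e j = i then ζ h.choose else Classical.arbitrary _ with hz'
    have hlam'e : ∀ j, lam' (e j) = w j := by
      intro j
      show (if h : ∃ j', e j' = e j then w h.choose else 0) = w j
      rw [dif_pos ⟨j, rfl⟩, hkey j ⟨j, rfl⟩]
    have hz'e : ∀ j, z' (e j) = ζ j := by
      intro j
      show (if h : ∃ j', e j' = e j then ζ h.choose else Classical.arbitrary _) = ζ j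
      rw [dif_pos ⟨j, rfl⟩, hkey j ⟨j, rfl⟩]
    have hmem : lam' ∈ stdSimplex ℝ (Fin (m + 2)) := by
      refine ⟨fun i => ?_, ?_⟩
      · show (0:ℝ) ≤ if h : ∃ j, e j = i then w h.choose else 0
        by_cases h : ∃ j, e j = i
        · rw [dif_pos h]; exact (hw0 _).le
        · rw [dif_neg h]
      · rw [stmt11_sum_pad e lam' (fun i hi => dif_neg hi)]
        simp only [hlam'e]
        exact hw1
    refine ⟨(⟨lam', hmem⟩, z'), ?_⟩
    have hfst : (∑ j, w j • zz j).1 = ∑ j, w j • (ζ j : Fin m → ℝ) := by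
      rw [Prod.fst_sum]
      exact Finset.sum_congr rfl fun j _ => by rw [← hζ j]; rfl
    have hsnd : (∑ j, w j • zz j).2 = ∑ j, w j * f (ζ j, y) := by
      rw [Prod.snd_sum]
      exact Finset.sum_congr rfl fun j _ => by rw [← hζ j]; rfl
    have e1 : ∑ i, lam' i • (z' i : Fin m → ℝ) = ∑ j, w j • (ζ j : Fin m → ℝ) := by
      rw [stmt11_sum_pad e _ (fun i hi => by
        show (if h : ∃ j, e j = i then w h.choose else 0) • (z' i : Fin m → ℝ) = 0
        rw [dif_neg hi, zero_smul])]
      exact Finset.sum_congr rfl fun j _ => by rw [hlam'e, hz'e]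
    have e2 : ∑ i, lam' i * f (z' i, y) = ∑ j, w j * f (ζ j, y) := by
      rw [stmt11_sum_pad e _ (fun i hi => by
        show (if h : ∃ j, e j = i then w h.choose else 0) * f (z' i, y) = 0
        rw [dif_neg hi, zero_mul])]
      exact Finset.sum_congr rfl fun j _ => by rw [hlam'e, hz'e]
    have : stmt11Psi f y (⟨lam', hmem⟩, z') = ∑ j, w j • zz j := by
      refine Prod.ext ?_ ?_
      · show ∑ i, lam' i • (z' i : Fin m → ℝ) = _
        rw [e1, hfst]
      · show ∑ i, lam' i * f (z' i, y) = _
        rw [e2, hsnd]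
    rw [this, hwz]
  · rintro ⟨q, rfl⟩
    have : stmt11Psi f y q =
        ∑ i, (q.1 : Fin (m+2) → ℝ) i • ((q.2 i : Fin m → ℝ), f (q.2 i, y)) := by
      refine Prod.ext ?_ ?_
      · rw [Prod.fst_sum]; rfl
      · rw [Prod.snd_sum]; rfl
    rw [this]
    refine Convex.sum_mem (convex_convexHull ℝ _) (fun i _ => q.1.2.1 i) q.1.2.2
      (fun i _ => subset_convexHull ℝ _ ⟨q.2 i, rfl⟩)

lemma stmt11_integral_discrete {X : Type*} [TopologicalSpace X] [CompactSpace X]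
    [SecondCountableTopology X] [MeasurableSpace X] [OpensMeasurableSpace X]
    {E : Type*} [NormedAddCommGroup E] [NormedSpace ℝ E] [CompleteSpace E]
    {Nn : ℕ} (lam : Fin Nn → ℝ) (hlam : ∀ i, 0 ≤ lam i) (z : Fin Nn → X)
    {g : X → E} (hg : Continuous g) :
    ∫ x, g x ∂(∑ i, ENNReal.ofReal (lam i) • Measure.dirac (z i)) = ∑ i, lam i • g (z i) := by
  rw [integral_finset_sum_measure
    (fun i _ => (stmt11_integrable_of_continuous _ hg).smul_measure ENNReal.ofReal_ne_top)]
  refine Finset.sum_congr rfl fun i _ => ?_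
  rw [integral_smul_measure, integral_dirac' g _ hg.stronglyMeasurable,
    ENNReal.toReal_ofReal (hlam i)]

end Stmt11Aux

theorem stmt_11 (m n : ℕ)
    (f : ↥(stdSimplex ℝ (Fin m)) × ↥(stdSimplex ℝ (Fin n)) → ℝ)
    (hf : Continuous f) :
    UpperSemicontinuous (fun xy : ↥(stdSimplex ℝ (Fin m)) × ↥(stdSimplex ℝ (Fin n)) =>
      sSup {rr : ℝ | ∃ p : ProbabilityMeasure ↥(stdSimplex ℝ (Fin m)),
        (∫ z, (z : Fin m → ℝ) ∂(p : Measure ↥(stdSimplex ℝ (Fin m)))) = (xy.1 : Fin m → ℝ) ∧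
        rr = ∫ z, f (z, xy.2) ∂(p : Measure ↥(stdSimplex ℝ (Fin m)))}) := by
  classical
  rcases isEmpty_or_nonempty ↥(stdSimplex ℝ (Fin m)) with hm | hm
  · intro xy; exact (hm.false xy.1).elim
  -- Notation
  have hΓ : ∀ (y : ↥(stdSimplex ℝ (Fin n))) (z : ↥(stdSimplex ℝ (Fin m))),
      ((z : Fin m → ℝ), f (z, y)) ∈ convexHull ℝ (stmt11Gam f y) :=
    fun y z => subset_convexHull ℝ _ ⟨z, rfl⟩
  -- continuity of Psi
  have hPsiCont : ∀ y, Continuous (stmt11Psi f y) := by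
    intro y
    refine Continuous.prodMk ?_ ?_
    · refine continuous_finset_sum _ fun i _ => Continuous.fun_smul ?_ ?_
      · exact (continuous_apply i).comp (continuous_subtype_val.comp continuous_fst)
      · exact continuous_subtype_val.comp ((continuous_apply i).comp continuous_snd)
    · refine continuous_finset_sum _ fun i _ => Continuous.mul ?_ ?_
      · exact (continuous_apply i).comp (continuous_subtype_val.comp continuous_fst)
      · exact hf.comp (((continuous_apply i).comp continuous_snd).prodMk continuous_const)
  have hrange : ∀ y, convexHull ℝ (stmt11Gam f y) = Set.range (stmt11Psi f y) :=
    fun y => Set.ext fun c => stmt11_mem_hull_iff f hm y c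
  have hHcomp : ∀ y, IsCompact (convexHull ℝ (stmt11Gam f y)) := by
    intro y; rw [hrange y]; exact isCompact_range (hPsiCont y)
  -- slices
  set slice : ↥(stdSimplex ℝ (Fin m)) × ↥(stdSimplex ℝ (Fin n)) → Set ℝ :=
    fun xy => {v : ℝ | ((xy.1 : Fin m → ℝ), v) ∈ convexHull ℝ (stmt11Gam f xy.2)} with hslice
  have hslicecomp : ∀ xy, IsCompact (slice xy) := by
    intro xy
    have : slice xy = Prod.snd '' (convexHull ℝ (stmt11Gam f xy.2) ∩
        (Prod.fst ⁻¹' {(xy.1 : Fin m → ℝ)})) := by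
      ext v
      constructor
      · intro hv
        exact ⟨((xy.1 : Fin m → ℝ), v), ⟨hv, rfl⟩, rfl⟩
      · rintro ⟨c, ⟨hc, hc1⟩, rfl⟩
        have : c = ((xy.1 : Fin m → ℝ), c.2) := Prod.ext hc1 rfl
        show ((xy.1 : Fin m → ℝ), c.2) ∈ convexHull ℝ (stmt11Gam f xy.2)
        rwa [← this]
    rw [this]
    exact (((hHcomp xy.2).inter_right
      (isClosed_singleton.preimage continuous_fst)).image continuous_snd)
  have hslicene : ∀ xy, (slice xy).Nonempty := fun xy => ⟨f (xy.1, xy.2), hΓ xy.2 xy.1⟩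
  have hbdd : ∀ xy, BddAbove (slice xy) := fun xy => (hslicecomp xy).bddAbove
  have hsSupmem : ∀ xy, sSup (slice xy) ∈ slice xy :=
    fun xy => (hslicecomp xy).sSup_mem (hslicene xy)
  -- the set in the statement equals the slice
  have hset : ∀ xy : ↥(stdSimplex ℝ (Fin m)) × ↥(stdSimplex ℝ (Fin n)),
      {rr : ℝ | ∃ p : ProbabilityMeasure ↥(stdSimplex ℝ (Fin m)),
        (∫ z, (z : Fin m → ℝ) ∂(p : Measure ↥(stdSimplex ℝ (Fin m)))) = (xy.1 : Fin m → ℝ) ∧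
        rr = ∫ z, f (z, xy.2) ∂(p : Measure ↥(stdSimplex ℝ (Fin m)))} = slice xy := by
    intro xy
    obtain ⟨x, y⟩ := xy
    ext v
    constructor
    · rintro ⟨p, hbar, rfl⟩
      set μ := (p : Measure ↥(stdSimplex ℝ (Fin m))) with hμ
      have hc1 : Continuous fun z : ↥(stdSimplex ℝ (Fin m)) => (z : Fin m → ℝ) :=
        continuous_subtype_val
      have hc2 : Continuous fun z : ↥(stdSimplex ℝ (Fin m)) => f (z, y) :=
        hf.comp (continuous_id.prodMk continuous_const)
      have hint1 : Integrable (fun z : ↥(stdSimplex ℝ (Fin m)) => (z : Fin m → ℝ)) μ :=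
        stmt11_integrable_of_continuous μ hc1
      have hint2 : Integrable (fun z : ↥(stdSimplex ℝ (Fin m)) => f (z, y)) μ :=
        stmt11_integrable_of_continuous μ hc2
      have hint : Integrable
          (fun z : ↥(stdSimplex ℝ (Fin m)) => ((z : Fin m → ℝ), f (z, y))) μ :=
        stmt11_integrable_of_continuous μ (hc1.prodMk hc2)
      have hmemH := (convex_convexHull ℝ (stmt11Gam f y)).integral_mem
        ((hHcomp y).isClosed) (Filter.Eventually.of_forall fun z => hΓ y z) hint
      rw [integral_pair hint1 hint2] at hmemH
      show ((x : Fin m → ℝ), _) ∈ convexHull ℝ (stmt11Gam f y)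
      rwa [hbar] at hmemH
    · intro hv
      have hv' : ((x : Fin m → ℝ), v) ∈ convexHull ℝ (stmt11Gam f y) := hv
      obtain ⟨q, hq⟩ := (stmt11_mem_hull_iff f hm y _).mp hv'
      obtain ⟨lam, z⟩ := q
      have hq1 : ∑ i, (lam : Fin (m+2) → ℝ) i • (z i : Fin m → ℝ) = (x : Fin m → ℝ) :=
        congrArg Prod.fst hq
      have hq2 : ∑ i, (lam : Fin (m+2) → ℝ) i * f (z i, y) = v := congrArg Prod.snd hq
      set μ : Measure ↥(stdSimplex ℝ (Fin m)) :=
        ∑ i, ENNReal.ofReal ((lam : Fin (m+2) → ℝ) i) • Measure.dirac (z i) with hμ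
      have hprob : IsProbabilityMeasure μ := by
        constructor
        rw [hμ, Measure.finset_sum_apply]
        have : ∀ i : Fin (m+2),
            (ENNReal.ofReal ((lam : Fin (m+2) → ℝ) i) • Measure.dirac (z i)) Set.univ
              = ENNReal.ofReal ((lam : Fin (m+2) → ℝ) i) := by
          intro i; simp
        rw [Finset.sum_congr rfl fun i _ => this i,
          ← ENNReal.ofReal_sum_of_nonneg (f := (lam : Fin (m+2) → ℝ)) (fun i _ => lam.2.1 i),
          (show ∑ i, (lam : Fin (m+2) → ℝ) i = 1 from lam.2.2)]
        exact ENNReal.ofReal_one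
      have hcy : Continuous (fun z' : ↥(stdSimplex ℝ (Fin m)) => f (z', y)) :=
        hf.comp (continuous_id.prodMk continuous_const)
      have hcv : Continuous (fun z' : ↥(stdSimplex ℝ (Fin m)) => (z' : Fin m → ℝ)) :=
        continuous_subtype_val
      refine ⟨⟨μ, hprob⟩, ?_, ?_⟩
      · show (∫ z', (z' : Fin m → ℝ) ∂μ) = (x : Fin m → ℝ)
        rw [hμ, stmt11_integral_discrete (lam : Fin (m+2) → ℝ) (fun i => lam.2.1 i) _ hcv]
        exact hq1
      · show v = ∫ z', f (z', y) ∂μ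
        rw [hμ, stmt11_integral_discrete (lam : Fin (m+2) → ℝ) (fun i => lam.2.1 i) _ hcy]
        simp only [smul_eq_mul]
        exact hq2.symm
  have hfun : (fun xy : ↥(stdSimplex ℝ (Fin m)) × ↥(stdSimplex ℝ (Fin n)) =>
      sSup {rr : ℝ | ∃ p : ProbabilityMeasure ↥(stdSimplex ℝ (Fin m)),
        (∫ z, (z : Fin m → ℝ) ∂(p : Measure ↥(stdSimplex ℝ (Fin m)))) = (xy.1 : Fin m → ℝ) ∧
        rr = ∫ z, f (z, xy.2) ∂(p : Measure ↥(stdSimplex ℝ (Fin m)))})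
      = fun xy => sSup (slice xy) := funext fun xy => by rw [hset xy]
  rw [hfun, upperSemicontinuous_iff_isClosed_preimage]
  intro a
  -- the compact parameter space
  set X := ↥(stdSimplex ℝ (Fin (m+2))) × (Fin (m+2) → ↥(stdSimplex ℝ (Fin m))) ×
    ↥(stdSimplex ℝ (Fin n)) with hX
  set val : X → ℝ := fun q => ∑ i, (q.1 : Fin (m+2) → ℝ) i * f (q.2.1 i, q.2.2) with hval
  set φ : X → (Fin m → ℝ) × ↥(stdSimplex ℝ (Fin n)) :=
    fun q => (∑ i, (q.1 : Fin (m+2) → ℝ) i • (q.2.1 i : Fin m → ℝ), q.2.2) with hφ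
  have hvalcont : Continuous val := by
    refine continuous_finset_sum _ fun i _ => Continuous.mul ?_ ?_
    · exact (continuous_apply i).comp (continuous_subtype_val.comp continuous_fst)
    · exact hf.comp ((((continuous_apply i).comp (continuous_fst.comp continuous_snd))).prodMk
        (continuous_snd.comp continuous_snd))
  have hφcont : Continuous φ := by
    refine Continuous.prodMk ?_ (continuous_snd.comp continuous_snd)
    refine continuous_finset_sum _ fun i _ => Continuous.fun_smul ?_ ?_
    · exact (continuous_apply i).comp (continuous_subtype_val.comp continuous_fst)
    · exact continuous_subtype_val.comp ((continuous_apply i).comp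
        (continuous_fst.comp continuous_snd))
  set K : Set X := {q | a ≤ val q} with hK
  have hKcomp : IsCompact K := (isClosed_Ici.preimage hvalcont).isCompact
  have himage : (fun xy : ↥(stdSimplex ℝ (Fin m)) × ↥(stdSimplex ℝ (Fin n)) =>
      sSup (slice xy)) ⁻¹' Set.Ici a
      = (fun xy : ↥(stdSimplex ℝ (Fin m)) × ↥(stdSimplex ℝ (Fin n)) =>
          ((xy.1 : Fin m → ℝ), xy.2)) ⁻¹' (φ '' K) := by
    ext xy
    obtain ⟨x, y⟩ := xy
    constructor
    · intro ha
      have hmem : ((x : Fin m → ℝ), sSup (slice (x, y))) ∈ convexHull ℝ (stmt11Gam f y) :=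
        hsSupmem (x, y)
      obtain ⟨q0, hq0⟩ := (stmt11_mem_hull_iff f hm y _).mp hmem
      refine ⟨(q0.1, q0.2, y), ?_, ?_⟩
      · show a ≤ val (q0.1, q0.2, y)
        have h2 : (stmt11Psi f y q0).2 = sSup (slice (x, y)) := by rw [hq0]
        have h3 : val (q0.1, q0.2, y) = (stmt11Psi f y q0).2 := rfl
        rw [h3, h2]
        exact ha
      · show φ (q0.1, q0.2, y) = ((x : Fin m → ℝ), y)
        have h1 : (stmt11Psi f y q0).1 = (x : Fin m → ℝ) := by rw [hq0]
        exact Prod.ext h1 rfl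
    · rintro ⟨q, hqK, hqe⟩
      have hy : q.2.2 = y := congrArg Prod.snd hqe
      have hx : ∑ i, (q.1 : Fin (m+2) → ℝ) i • (q.2.1 i : Fin m → ℝ) = (x : Fin m → ℝ) :=
        congrArg Prod.fst hqe
      have hvmem : val q ∈ slice (x, y) := by
        show ((x : Fin m → ℝ), val q) ∈ convexHull ℝ (stmt11Gam f y)
        refine (stmt11_mem_hull_iff f hm y _).mpr ⟨(q.1, q.2.1), ?_⟩
        refine Prod.ext hx ?_
        show ∑ i, (q.1 : Fin (m+2) → ℝ) i * f (q.2.1 i, y) = val q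
        have h4 : val q = ∑ i, (q.1 : Fin (m+2) → ℝ) i * f (q.2.1 i, q.2.2) := rfl
        rw [h4, hy]
      exact le_trans hqK (le_csSup (hbdd (x, y)) hvmem)
  rw [himage]
  refine IsClosed.preimage ?_ ((hKcomp.image hφcont).isClosed)
  exact continuous_subtype_val.prodMap continuous_id
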